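/- Let C be a coalgebra over a commutative ring k and Σ a right C-comodule. Define Q = { q : Σ → C* | for all x ∈ Σ, c ∈ C : Σ q(x₍₀₎)(c) x₍₁₎ = Σ c₍₁₎ q(x)(c₍₂₎) }. Then for every right C-comodule M, every q ∈ Q and every m ∈ M, the map Σ → M given by x ↦ m·q(x) (using the right C*-action on M) is a morphism of right C-comodules. -/
import Mathlib


open TensorProduct

noncomputable section

/-- A right comodule structure on `M` over a `k`-coalgebra `C`. -/
structure RightComodule (k C M : Type*) [CommRing k] [AddCommGroup C] [Module k C]
    [Coalgebra k C] [AddCommGroup M] [Module k M] where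
  ρ : M →ₗ[k] M ⊗[k] C
  coassoc : ∀ m : M,
    (TensorProduct.assoc k M C C) (ρ.rTensor C (ρ m)) =
      (Coalgebra.comul (R := k) (A := C)).lTensor M (ρ m)
  counit_comp : ∀ m : M,
    (TensorProduct.rid k M) ((Coalgebra.counit (R := k) (A := C)).lTensor M (ρ m)) = m

variable {k C M N : Type*} [CommRing k] [AddCommGroup C] [Module k C] [Coalgebra k C]

/-- Convolution product on the dual of a coalgebra: `(conv f g) c = ∑ f c₍₁₎ * g c₍₂₎`. -/
def conv (f g : C →ₗ[k] k) : C →ₗ[k] k :=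
  (TensorProduct.lid k k).toLinearMap ∘ₗ TensorProduct.map f g ∘ₗ Coalgebra.comul

/-- The right action of the dual of `C` on a right `C`-comodule: `x · f = ∑ x₍₀₎ * f x₍₁₎`. -/
def ract [AddCommGroup M] [Module k M] (σ : RightComodule k C M) (m : M)
    (f : C →ₗ[k] k) : M :=
  (TensorProduct.rid k M) (f.lTensor M (σ.ρ m))

/-- A map of right `C`-comodules. -/
def IsColinear [AddCommGroup M] [Module k M] [AddCommGroup N] [Module k N]
    (σM : RightComodule k C M) (σN : RightComodule k C N) (φ : M →ₗ[k] N) : Prop :=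
  φ.rTensor C ∘ₗ σM.ρ = σN.ρ ∘ₗ φ

/-- The `k`-module `Q` associated to a right `C`-comodule `M`:
maps `q : M → C*` with `∑ q x₍₀₎ c • x₍₁₎ = ∑ c₍₁₎ • q x c₍₂₎` for all `x, c`. -/
def QSet [AddCommGroup M] [Module k M] (σ : RightComodule k C M) :
    Set (M →ₗ[k] C →ₗ[k] k) :=
  { q | ∀ (x : M) (c : C),
      (TensorProduct.lid k C) (((LinearMap.applyₗ c).comp q).rTensor C (σ.ρ x)) =
      (TensorProduct.rid k C) ((q x).lTensor C (Coalgebra.comul c)) }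

/-- contraction of `u : M ⊗ C` against a functional, linearly. -/
def contr {M : Type*} [AddCommGroup M] [Module k M] (u : M ⊗[k] C) :
    (C →ₗ[k] k) →ₗ[k] M where
  toFun f := (TensorProduct.rid k M) (f.lTensor M u)
  map_add' f g := by simp [LinearMap.lTensor_add]
  map_smul' r f := by simp [LinearMap.lTensor_smul]

lemma contr_zero {M : Type*} [AddCommGroup M] [Module k M] :
    (contr (0 : M ⊗[k] C)) = 0 := by
  ext f; simp [contr]

lemma contr_add {M : Type*} [AddCommGroup M] [Module k M] (u v : M ⊗[k] C) :
    contr (u + v) = contr u + contr v := by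
  ext f; simp [contr]

lemma contr_tmul {M : Type*} [AddCommGroup M] [Module k M] (m : M) (c : C) :
    contr (m ⊗ₜ[k] c) =
      (LinearMap.toSpanSingleton k M m) ∘ₗ (LinearMap.applyₗ c) := by
  ext f; simp [contr]

lemma rid_natural {A B : Type*} [AddCommGroup A] [Module k A] [AddCommGroup B] [Module k B]
    (f : A →ₗ[k] B) (z : A ⊗[k] k) :
    f ((TensorProduct.rid k A) z) = (TensorProduct.rid k B) (f.rTensor k z) := by
  induction z using TensorProduct.induction_on with
  | zero => simp
  | tmul a r => simp [TensorProduct.rid_tmul]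
  | add x y hx hy => simp [map_add, hx, hy]

theorem stmt_1 {P M : Type*} [AddCommGroup P] [Module k P] [AddCommGroup M] [Module k M]
    (σ : RightComodule k C P) (σM : RightComodule k C M)
    (q : P →ₗ[k] C →ₗ[k] k) (hq : q ∈ QSet σ) (m : M) :
    ∃ ψ : P →ₗ[k] M, (∀ x : P, ψ x = ract σM m (q x)) ∧ IsColinear σ σM ψ := by
  refine ⟨contr (σM.ρ m) ∘ₗ q, fun x => rfl, ?_⟩
  unfold IsColinear
  ext x
  simp only [LinearMap.comp_apply]
  have hR : σM.ρ ((contr (σM.ρ m)) (q x)) =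
      (TensorProduct.rid k (M ⊗[k] C))
        ((q x).lTensor (M ⊗[k] C)
          ((TensorProduct.assoc k M C C).symm
            ((Coalgebra.comul (R := k) (A := C)).lTensor M (σM.ρ m)))) := by
    have h1 : σM.ρ ((contr (σM.ρ m)) (q x)) =
        (TensorProduct.rid k (M ⊗[k] C)) (σM.ρ.rTensor k ((q x).lTensor M (σM.ρ m))) :=
      rid_natural σM.ρ _
    rw [h1]
    congr 1
    have h2 : σM.ρ.rTensor k ((q x).lTensor M (σM.ρ m))
        = (q x).lTensor (M ⊗[k] C) (σM.ρ.rTensor C (σM.ρ m)) := by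
      rw [← LinearMap.comp_apply, LinearMap.rTensor_comp_lTensor,
          ← LinearMap.lTensor_comp_rTensor, LinearMap.comp_apply]
    rw [h2]
    congr 1
    rw [← σM.coassoc m, LinearEquiv.symm_apply_apply]
  rw [hR]
  rw [show ((contr (σM.ρ m)) ∘ₗ q).rTensor C (σ.ρ x)
      = (contr (σM.ρ m)).rTensor C (q.rTensor C (σ.ρ x)) by
    rw [LinearMap.rTensor_comp, LinearMap.comp_apply]]
  have hv : ∀ c : C, (LinearMap.applyₗ c).rTensor C (q.rTensor C (σ.ρ x))
      = (TensorProduct.lid k C).symm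
        ((TensorProduct.rid k C) ((q x).lTensor C (Coalgebra.comul c))) := by
    intro c
    rw [LinearEquiv.eq_symm_apply, ← hq x c, ← LinearMap.comp_apply,
        ← LinearMap.rTensor_comp]
  generalize σM.ρ m = u
  induction u using TensorProduct.induction_on with
  | zero => simp [contr_zero]
  | add u u' hu hu' => simp only [contr_add, LinearMap.rTensor_add, LinearMap.add_apply,
      map_add, hu, hu']
  | tmul m' c' =>
    rw [contr_tmul, LinearMap.rTensor_comp, LinearMap.comp_apply, hv c',
        LinearMap.lTensor_tmul]
    generalize (Coalgebra.comul (R := k) (A := C)) c' = t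
    induction t using TensorProduct.induction_on with
    | zero => simp
    | add t t' ht ht' => simp only [tmul_add, map_add, ht, ht']
    | tmul c1 c2 =>
      rw [LinearMap.lTensor_tmul, TensorProduct.rid_tmul, map_smul,
        TensorProduct.lid_symm_apply, map_smul, LinearMap.rTensor_tmul,
        LinearMap.toSpanSingleton_apply, one_smul,
        TensorProduct.assoc_symm_tmul, LinearMap.lTensor_tmul,
        TensorProduct.rid_tmul]
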